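/- Let R be a commutative Noetherian ring, I_1, I_2 ideals, and F_1 ∈ I_1, F_2 ∈ I_2. Then the radical of the liaison addition ideal F_2 I_1 + F_1 I_2 equals √I_1 ∩ √I_2 ∩ √(F_1, F_2). -/

import Mathlib

/-- The radical of the liaison addition ideal `F₂I₁ + F₁I₂` is `√I₁ ∩ √I₂ ∩ √(F₁,F₂)`. -/
theorem radical_liaison_addition
    {R : Type*} [CommRing R] [IsNoetherianRing R]
    (I₁ I₂ : Ideal R) (F₁ F₂ : R) (h1 : F₁ ∈ I₁) (h2 : F₂ ∈ I₂) :
    (Ideal.span {F₂} * I₁ + Ideal.span {F₁} * I₂).radical =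
      I₁.radical ⊓ I₂.radical ⊓ (Ideal.span {F₁, F₂}).radical := by
  apply le_antisymm
  · refine le_inf (le_inf ?_ ?_) ?_
    · exact Ideal.radical_mono (sup_le
        (le_trans Ideal.mul_le_right (by exact fun x hx => hx))
        (Ideal.mul_le.2 fun a ha b hb =>
          I₁.mul_mem_right b (Ideal.span_le.2 (by simpa using h1) ha)))
    · exact Ideal.radical_mono (sup_le
        (Ideal.mul_le.2 fun a ha b hb =>
          I₂.mul_mem_right b (Ideal.span_le.2 (by simpa using h2) ha))
        Ideal.mul_le_right)
    · refine Ideal.radical_mono (sup_le (Ideal.mul_le.2 fun a ha b hb => ?_)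
        (Ideal.mul_le.2 fun a ha b hb => ?_))
      · exact Ideal.mul_mem_right b _ (Ideal.span_mono (by simp) ha)
      · exact Ideal.mul_mem_right b _ (Ideal.span_mono (by simp) ha)
  · rintro x ⟨⟨hx1, hx2⟩, hx3⟩
    obtain ⟨n₁, hn₁⟩ := hx1
    obtain ⟨n₂, hn₂⟩ := hx2
    obtain ⟨n₃, hn₃⟩ := hx3
    rw [Ideal.mem_span_pair] at hn₃
    obtain ⟨a, b, hab⟩ := hn₃
    refine ⟨n₁ + n₂ + n₃, ?_⟩
    have : x ^ (n₁ + n₂ + n₃) = a * (F₁ * x ^ n₂) * x ^ n₁ + b * (F₂ * x ^ n₁) * x ^ n₂ := by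
      rw [pow_add, pow_add, ← hab]; ring
    rw [this]
    refine Ideal.add_mem _ (Ideal.mem_sup_right ?_) (Ideal.mem_sup_left ?_)
    · exact Ideal.mul_mem_right _ _ (Ideal.mul_mem_left _ _
        (Ideal.mul_mem_mul (Ideal.mem_span_singleton_self F₁) hn₂))
    · exact Ideal.mul_mem_right _ _ (Ideal.mul_mem_left _ _
        (Ideal.mul_mem_mul (Ideal.mem_span_singleton_self F₂) hn₁))
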